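/- Under the hypotheses that D ≻ 0 and L ⪰ 0 are diagonal and (LA + AᵀL)/2 ≺ 4D, the equation Lπ(Ax+u) - Dx + c = 0 has a unique solution x* ∈ ℝⁿ. -/

import Mathlib

open Matrix

/-- The sigmoid function. -/
noncomputable def sig (θ : ℝ) : ℝ := 1 / (1 + Real.exp (-θ))

lemma one_add_exp_pos (θ : ℝ) : 0 < 1 + Real.exp (-θ) := by positivity

lemma sig_pos (θ : ℝ) : 0 < sig θ := by
  unfold sig; positivity

lemma sig_lt_one (θ : ℝ) : sig θ < 1 := by
  unfold sig
  rw [div_lt_one (one_add_exp_pos θ)]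
  linarith [Real.exp_pos (-θ)]

lemma sig_hasDerivAt (θ : ℝ) : HasDerivAt sig (sig θ * (1 - sig θ)) θ := by
  have h1 : HasDerivAt (fun t : ℝ => 1 + Real.exp (-t)) (-Real.exp (-θ)) θ := by
    simpa using (((Real.hasDerivAt_exp (-θ)).comp θ ((hasDerivAt_id θ).neg)).const_add 1)
  have h2 := h1.inv (ne_of_gt (one_add_exp_pos θ))
  have : HasDerivAt sig (Real.exp (-θ) / (1 + Real.exp (-θ))^2) θ := by
    have hs : sig = fun t : ℝ => (1 + Real.exp (-t))⁻¹ := by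
      funext t; simp [sig, one_div]
    rw [hs]
    rw [neg_neg] at h2; exact h2
  convert this using 1
  have hne := ne_of_gt (one_add_exp_pos θ)
  simp only [sig]
  field_simp
  ring

lemma sig_deriv_le (θ : ℝ) : sig θ * (1 - sig θ) ≤ 1/4 := by
  nlinarith [sq_nonneg (sig θ - 1/2)]

lemma sig_continuous : Continuous sig :=
  continuous_iff_continuousAt.mpr fun θ => (sig_hasDerivAt θ).continuousAt

/-- Mean value decomposition of sigmoid differences. -/
lemma sig_slope (a b : ℝ) : ∃ ρ : ℝ, 0 ≤ ρ ∧ ρ ≤ 1/4 ∧ sig a - sig b = ρ * (a - b) := by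
  rcases lt_trichotomy a b with h | h | h
  · obtain ⟨x, _, hx⟩ := exists_hasDerivAt_eq_slope sig (fun t => sig t * (1 - sig t)) h
      (fun t _ => (sig_hasDerivAt t).continuousAt.continuousWithinAt)
      (fun t _ => sig_hasDerivAt t)
    refine ⟨sig x * (1 - sig x), ?_, sig_deriv_le x, ?_⟩
    · nlinarith [sig_pos x, sig_lt_one x]
    · rw [hx]
      have : b - a ≠ 0 := by linarith
      field_simp
      ring
  · exact ⟨0, le_refl _, by norm_num, by rw [h]; ring⟩
  · obtain ⟨x, _, hx⟩ := exists_hasDerivAt_eq_slope sig (fun t => sig t * (1 - sig t)) h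
      (fun t _ => (sig_hasDerivAt t).continuousAt.continuousWithinAt)
      (fun t _ => sig_hasDerivAt t)
    refine ⟨sig x * (1 - sig x), ?_, sig_deriv_le x, ?_⟩
    · nlinarith [sig_pos x, sig_lt_one x]
    · rw [hx]
      have : a - b ≠ 0 := by linarith
      field_simp

lemma key {n : ℕ} (A : Matrix (Fin n) (Fin n) ℝ) (l d : Fin n → ℝ)
    (hd : ∀ i, 0 < d i)
    (hstab : ((4 : ℝ) • Matrix.diagonal d -
        (1 / 2 : ℝ) • (Matrix.diagonal l * A + Aᵀ * Matrix.diagonal l)).PosDef)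
    (e : Fin n → ℝ) (he2 : ∀ i, 4 * (e i)^2 ≤ e i * l i)
    (v : Fin n → ℝ) (hv : ∀ i, d i * v i = e i * (A.mulVec v) i) : v = 0 := by
  by_contra hne
  have hq := hstab.dotProduct_mulVec_pos hne
  set w := A.mulVec v with hw
  have hexp : star v ⬝ᵥ (((4 : ℝ) • Matrix.diagonal d -
      (1 / 2 : ℝ) • (Matrix.diagonal l * A + Aᵀ * Matrix.diagonal l)) *ᵥ v)
      = 4 * (∑ i, d i * v i * v i) - (∑ i, l i * v i * w i) := by
    have h1 : v ⬝ᵥ ((Matrix.diagonal l * A) *ᵥ v) = ∑ i, l i * v i * w i := by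
      rw [← Matrix.mulVec_mulVec]
      simp only [dotProduct, Matrix.mulVec_diagonal, ← hw]
      exact Finset.sum_congr rfl fun i _ => by ring
    have h2 : v ⬝ᵥ ((Aᵀ * Matrix.diagonal l) *ᵥ v) = ∑ i, l i * v i * w i := by
      have : Aᵀ * Matrix.diagonal l = (Matrix.diagonal l * A)ᵀ := by
        rw [Matrix.transpose_mul, Matrix.diagonal_transpose]
      rw [this, ← Matrix.vecMul_transpose, Matrix.transpose_transpose,
        dotProduct_comm, ← Matrix.dotProduct_mulVec]
      exact h1
    have h3 : v ⬝ᵥ (Matrix.diagonal d *ᵥ v) = ∑ i, d i * v i * v i := by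
      simp only [dotProduct, Matrix.mulVec_diagonal]
      exact Finset.sum_congr rfl fun i _ => by ring
    simp only [star_trivial, Matrix.sub_mulVec, Matrix.smul_mulVec,
      dotProduct_sub, dotProduct_smul, Matrix.add_mulVec,
      dotProduct_add, h1, h2, h3, smul_eq_mul]
    ring
  rw [hexp] at hq
  have hcomp : ∀ i, 4 * (d i * v i * v i) ≤ l i * v i * w i := by
    intro i
    have h1 : d i * v i = e i * w i := hv i
    have hwv : d i * (l i * v i * w i) = e i * l i * (w i * w i) := by
      calc d i * (l i * v i * w i) = l i * (d i * v i) * w i := by ring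
      _ = l i * (e i * w i) * w i := by rw [h1]
      _ = e i * l i * (w i * w i) := by ring
    have hvv : d i * (d i * v i * v i) = (e i * w i) * (e i * w i) := by
      calc d i * (d i * v i * v i) = (d i * v i) * (d i * v i) := by ring
      _ = _ := by rw [h1]
    have h4e : 4 * ((e i * w i) * (e i * w i)) ≤ e i * l i * (w i * w i) := by
      nlinarith [mul_nonneg (by nlinarith [he2 i] : (0:ℝ) ≤ e i * l i - 4 * (e i)^2)
        (sq_nonneg (w i))]
    nlinarith [hd i, hvv, hwv, h4e]
  have hsum : 4 * (∑ i, d i * v i * v i) ≤ ∑ i, l i * v i * w i := by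
    rw [Finset.mul_sum]
    exact Finset.sum_le_sum fun i _ => hcomp i
  linarith

theorem stmt_10 {n : ℕ} (A : Matrix (Fin n) (Fin n) ℝ) (l d u c : Fin n → ℝ)
    (hd : ∀ i, 0 < d i) (hl : ∀ i, 0 ≤ l i)
    (hstab : ((4 : ℝ) • Matrix.diagonal d -
        (1 / 2 : ℝ) • (Matrix.diagonal l * A + Aᵀ * Matrix.diagonal l)).PosDef) :
    ∃! x : Fin n → ℝ, ∀ i,
      l i * sig ((A.mulVec x) i + u i) - d i * x i + c i = 0 := by
  classical
  -- Uniqueness, stated first as a lemma-like `have`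
  have uniq : ∀ x y : Fin n → ℝ,
      (∀ i, l i * sig ((A.mulVec x) i + u i) - d i * x i + c i = 0) →
      (∀ i, l i * sig ((A.mulVec y) i + u i) - d i * y i + c i = 0) → x = y := by
    intro x y hx hy
    choose ρ hρ0 hρ4 hρeq using fun i =>
      sig_slope ((A.mulVec x) i + u i) ((A.mulVec y) i + u i)
    have hxy : x - y = 0 := by
      apply key A l d hd hstab (fun i => l i * ρ i)
      · intro i
        have h0 := hρ0 i; have h4 := hρ4 i; have hli := hl i
        nlinarith [mul_nonneg (mul_nonneg (mul_nonneg hli hli) h0)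
          (by linarith : (0:ℝ) ≤ 1 - 4 * ρ i)]
      · intro i
        have hsub : (A.mulVec (x - y)) i = (A.mulVec x) i - (A.mulVec y) i := by
          rw [Matrix.mulVec_sub]; rfl
        have heq : l i * (sig ((A.mulVec x) i + u i) - sig ((A.mulVec y) i + u i))
            = d i * (x i - y i) := by
          have h1 := hx i; have h2 := hy i
          ring_nf
          ring_nf at h1 h2
          linarith
        have := hρeq i
        have harg : (A.mulVec x) i + u i - ((A.mulVec y) i + u i)
            = (A.mulVec (x - y)) i := by rw [hsub]; ring
        calc d i * (x - y) i = d i * (x i - y i) := rfl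
        _ = l i * (sig ((A.mulVec x) i + u i) - sig ((A.mulVec y) i + u i)) := heq.symm
        _ = l i * (ρ i * ((A.mulVec x) i + u i - ((A.mulVec y) i + u i))) := by rw [this]
        _ = l i * ρ i * (A.mulVec (x - y)) i := by rw [harg]; ring
    have := sub_eq_zero.mp hxy
    exact this
  -- Existence
  rcases Nat.eq_zero_or_pos n with hn | hn
  · subst hn
    refine ⟨0, fun i => i.elim0, fun y _ => funext fun i => i.elim0⟩
  have hne : Nonempty (Fin n) := ⟨⟨0, hn⟩⟩
  set F : (Fin n → ℝ) → (Fin n → ℝ) :=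
    fun x i => l i * sig ((A.mulVec x) i + u i) - d i * x i + c i with hF
  set g : (Fin n → ℝ) → ℝ := fun x => ∑ i, (F x i)^2 with hg
  have hgcont : Continuous g := by
    apply continuous_finset_sum
    intro i _
    have hmv : Continuous fun x : Fin n → ℝ => (A.mulVec x) i :=
      (continuous_apply i).comp (A.mulVecLin.continuous_of_finiteDimensional)
    exact (((continuous_const.mul (sig_continuous.comp (hmv.add continuous_const))).sub
      (continuous_const.mul (continuous_apply i))).add continuous_const).pow 2
  have hgnonneg : ∀ x, 0 ≤ g x := fun x => Finset.sum_nonneg fun i _ => sq_nonneg _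
  -- bounds
  obtain ⟨i₀, -, hδ⟩ := Finset.exists_min_image Finset.univ d ⟨Classical.arbitrary _, Finset.mem_univ _⟩
  obtain ⟨i₁, -, hK⟩ := Finset.exists_max_image Finset.univ (fun i => l i + |c i|)
    ⟨Classical.arbitrary _, Finset.mem_univ _⟩
  set K : ℝ := l i₁ + |c i₁| with hKdef
  have hKnn : 0 ≤ K := by
    have := hl i₁; have := abs_nonneg (c i₁); linarith
  set R : ℝ := (K + g 0 + 1) / d i₀ with hR
  have hRpos : 0 < R := by
    apply div_pos _ (hd i₀)
    have := hgnonneg 0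
    linarith
  set S : Set (Fin n → ℝ) := Set.pi Set.univ (fun _ => Set.Icc (-R) R) with hS
  have hScompact : IsCompact S := isCompact_univ_pi fun i => isCompact_Icc
  have h0S : (0 : Fin n → ℝ) ∈ S := by
    intro i _
    constructor <;> simp <;> linarith
  obtain ⟨x₀, hx₀S, hx₀min⟩ := hScompact.exists_isMinOn ⟨0, h0S⟩ hgcont.continuousOn
  -- lower bound for F outside S
  have hFlb : ∀ (x : Fin n → ℝ) (i : Fin n), d i * |x i| - (l i + |c i|) ≤ |F x i| := by
    intro x i
    have h1 : |l i * sig ((A.mulVec x) i + u i) + c i| ≤ l i + |c i| := by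
      refine (abs_add_le _ _).trans ?_
      have : |l i * sig ((A.mulVec x) i + u i)| ≤ l i := by
        rw [abs_mul, abs_of_nonneg (hl i), abs_of_pos (sig_pos _)]
        nlinarith [sig_lt_one ((A.mulVec x) i + u i), hl i, sig_pos ((A.mulVec x) i + u i)]
      linarith
    have h2 := abs_sub_abs_le_abs_sub (d i * x i) (l i * sig ((A.mulVec x) i + u i) + c i)
    have h3 : |d i * x i - (l i * sig ((A.mulVec x) i + u i) + c i)| = |F x i| := by
      rw [← abs_neg]
      congr 1
      simp only [hF]
      ring
    rw [h3] at h2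
    rw [abs_mul, abs_of_pos (hd i)] at h2
    linarith
  -- global minimum
  have hglobal : ∀ x, g x₀ ≤ g x := by
    intro x
    by_cases hx : x ∈ S
    · exact hx₀min hx
    · have hgx0 : g x₀ ≤ g 0 := hx₀min h0S
      simp only [hS, Set.mem_pi, Set.mem_univ, forall_true_left, Set.mem_Icc] at hx
      push_neg at hx
      obtain ⟨i, hi⟩ := hx
      have hiR : R < |x i| := by
        rcases le_or_gt (-R) (x i) with h | h
        · exact lt_of_lt_of_le (hi h) (le_abs_self _)
        · have h2 : -(x i) ≤ |x i| := neg_le_abs (x i)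
          linarith
      have hd0 : d i₀ ≤ d i := hδ i (Finset.mem_univ i)
      have hKi : l i + |c i| ≤ K := hK i (Finset.mem_univ i)
      have hdR : d i₀ * R = K + g 0 + 1 := by
        rw [hR, mul_div_cancel₀ _ (ne_of_gt (hd i₀))]
      have hlow : g 0 + 1 ≤ |F x i| := by
        have h1 := hFlb x i
        have h2 : d i₀ * R ≤ d i * |x i| := by
          have : d i₀ * R ≤ d i₀ * |x i| := by
            apply mul_le_mul_of_nonneg_left (le_of_lt hiR) (le_of_lt (hd i₀))
          have : d i₀ * |x i| ≤ d i * |x i| :=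
            mul_le_mul_of_nonneg_right hd0 (abs_nonneg _)
          linarith [mul_le_mul_of_nonneg_left (le_of_lt hiR) (le_of_lt (hd i₀))]
        rw [hdR] at h2
        linarith
      have hsq : (g 0 + 1)^2 ≤ (F x i)^2 := by
        have h0 : 0 ≤ g 0 + 1 := by linarith [hgnonneg 0]
        nlinarith [hlow, abs_nonneg (F x i), sq_abs (F x i)]
      have hterm : (F x i)^2 ≤ g x :=
        Finset.single_le_sum (fun j _ => sq_nonneg (F x j)) (Finset.mem_univ i)
      nlinarith [hgnonneg 0]
  -- derivative conditions
  set α : Fin n → ℝ := A.mulVec x₀ with hα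
  set s : Fin n → ℝ := fun i => sig (α i + u i) * (1 - sig (α i + u i)) with hs
  set φ : Fin n → ℝ := F x₀ with hφ
  have hderiv : ∀ v : Fin n → ℝ,
      (∑ i, 2 * φ i * (l i * (s i * (A.mulVec v) i) - d i * v i)) = 0 := by
    intro v
    set β : Fin n → ℝ := A.mulVec v with hβ
    set ψ : ℝ → ℝ := fun t => g (x₀ + t • v) with hψ
    have hlocmin : IsLocalMin ψ 0 := by
      apply Filter.Eventually.of_forall
      intro t
      have : ψ 0 = g x₀ := by simp [hψ]
      rw [this]
      exact hglobal _
    have hψeq : ψ = fun t => ∑ i,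
        (l i * sig (α i + t * β i + u i) - d i * (x₀ i + t * v i) + c i)^2 := by
      funext t
      simp only [hψ, hg, hF]
      apply Finset.sum_congr rfl
      intro i _
      have : (A.mulVec (x₀ + t • v)) i = α i + t * β i := by
        rw [Matrix.mulVec_add, Matrix.mulVec_smul]
        simp [hα, hβ]
      rw [this]
      simp [Pi.add_apply, Pi.smul_apply, smul_eq_mul]
    have hψderiv : HasDerivAt ψ
        (∑ i, 2 * φ i * (l i * (s i * β i) - d i * v i)) 0 := by
      rw [hψeq]
      have hterm : ∀ i : Fin n, HasDerivAt
          (fun t => (l i * sig (α i + t * β i + u i) - d i * (x₀ i + t * v i) + c i)^2)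
          (2 * φ i * (l i * (s i * β i) - d i * v i)) 0 := by
        intro i
        have hθ : HasDerivAt (fun t : ℝ => α i + t * β i + u i) (β i) 0 := by
          simpa using (((hasDerivAt_id (0:ℝ)).mul_const (β i)).const_add (α i)).add_const (u i)
        have hsig : HasDerivAt (fun t : ℝ => sig (α i + t * β i + u i))
            (s i * β i) 0 := by
          have := (sig_hasDerivAt (α i + 0 * β i + u i)).comp 0 hθ
          simpa [hs, Function.comp_def] using this
        have hlin : HasDerivAt (fun t : ℝ => d i * (x₀ i + t * v i)) (d i * v i) 0 := by
          simpa using (((hasDerivAt_id (0:ℝ)).mul_const (v i)).const_add (x₀ i)).const_mul (d i)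
        have hinner : HasDerivAt
            (fun t : ℝ => l i * sig (α i + t * β i + u i) - d i * (x₀ i + t * v i) + c i)
            (l i * (s i * β i) - d i * v i) 0 :=
          ((hsig.const_mul (l i)).sub hlin).add_const (c i)
        have := hinner.pow 2
        have hval : l i * sig (α i + 0 * β i + u i) - d i * (x₀ i + 0 * v i) + c i = φ i := by
          simp [hφ, hF, hα]
        refine this.congr_deriv ?_
        rw [hval]; norm_num
      exact HasDerivAt.fun_sum fun i _ => hterm i
    exact hlocmin.hasDerivAt_eq_zero hψderiv
  -- Jacobian matrix M and its invertibility
  set e : Fin n → ℝ := fun i => l i * s i with he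
  set M : Matrix (Fin n) (Fin n) ℝ := Matrix.diagonal e * A - Matrix.diagonal d with hM
  have hMv : ∀ (v : Fin n → ℝ) (i : Fin n),
      (M.mulVec v) i = e i * (A.mulVec v) i - d i * v i := by
    intro v i
    rw [hM, Matrix.sub_mulVec]
    simp only [Pi.sub_apply]
    rw [← Matrix.mulVec_mulVec]
    simp only [Matrix.mulVec_diagonal]
  have he2 : ∀ i, 4 * (e i)^2 ≤ e i * l i := by
    intro i
    have hsi0 : 0 ≤ s i := by
      have h1 := sig_pos (α i + u i); have h2 := sig_lt_one (α i + u i)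
      simp only [hs]; nlinarith
    have hsi4 : s i ≤ 1/4 := sig_deriv_le _
    have hli := hl i
    simp only [he]
    nlinarith [mul_nonneg (mul_nonneg (mul_nonneg hli hli) hsi0)
      (by linarith : (0:ℝ) ≤ 1 - 4 * s i), sq_nonneg (l i * s i)]
  have hMinj : Function.Injective M.mulVecLin := by
    rw [injective_iff_map_eq_zero]
    intro v hv
    apply key A l d hd hstab e he2
    intro i
    have h0 : M.mulVec v = 0 := hv
    have := congrFun h0 i
    rw [hMv v i] at this
    simp only [Pi.zero_apply] at this
    linarith
  have hMsurj : Function.Surjective M.mulVecLin :=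
    LinearMap.injective_iff_surjective.mp hMinj
  obtain ⟨v, hvφ⟩ := hMsurj φ
  have hvφ' : M.mulVec v = φ := hvφ
  have hφ0 : ∀ i, φ i = 0 := by
    have h1 := hderiv v
    have h2 : ∀ i, l i * (s i * (A.mulVec v) i) - d i * v i = φ i := by
      intro i
      have h3 := congrFun hvφ' i
      rw [hMv v i] at h3
      rw [← h3]
      simp only [he]
      ring
    have h3 : (∑ i, 2 * φ i * φ i) = 0 := by
      rw [← h1]
      exact Finset.sum_congr rfl fun i _ => by rw [h2 i]
    intro i
    have hnn : ∀ j ∈ Finset.univ, (0:ℝ) ≤ 2 * φ j * φ j := by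
      intro j _
      nlinarith [sq_nonneg (φ j)]
    have := (Finset.sum_eq_zero_iff_of_nonneg hnn).mp h3 i (Finset.mem_univ i)
    nlinarith [sq_nonneg (φ i)]
  refine ⟨x₀, ?_, ?_⟩
  · intro i
    have := hφ0 i
    rw [hφ, hF] at this
    exact this
  · intro y hy
    exact uniq y x₀ hy (fun i => by have := hφ0 i; rw [hφ, hF] at this; exact this)
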